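/- In the Migliore construction, every homogeneous element f ∈ I = I_1 ∩ I_2 of degree strictly less than s belongs to the ideal generated by the set 𝒜 = {x_0(x_2 − x_0), …, x_0(x_n − x_0), x_0·∏_{i=1}^{β}(u_i x_0 − x_1)}. Consequently, every minimal generator of I other than those in 𝒜 has degree at least s. -/

import Mathlib

open MvPolynomial

noncomputable section

namespace PointsMinDist

variable {K : Type} [Field K]

/-- The (homogeneous) vanishing ideal of a set of points of projective space:
all polynomials vanishing at every representative vector of every point. -/
def vanishingIdeal {m : ℕ} (Γ : Set (Projectivization K (Fin m → K))) :
    Ideal (MvPolynomial (Fin m) K) where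
  carrier := {f | ∀ P ∈ Γ, ∀ (v : Fin m → K) (hv : v ≠ 0),
      Projectivization.mk K v hv = P → MvPolynomial.eval v f = 0}
  zero_mem' := by intro P hP v hv h; simp
  add_mem' := by
    intro f g hf hg P hP v hv h
    simp [hf P hP v hv h, hg P hP v hv h]
  smul_mem' := by
    intro c f hf P hP v hv h
    simp [smul_eq_mul, hf P hP v hv h]

/-- The degree-`d` graded component of a (homogeneous) ideal, as a `K`-subspace. -/
def degPart {m : ℕ} (I : Ideal (MvPolynomial (Fin m) K)) (d : ℕ) :
    Submodule K (MvPolynomial (Fin m) K) :=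
  Submodule.restrictScalars K I ⊓ homogeneousSubmodule (Fin m) K d

/-- `K`-dimension of the degree-`d` component of an ideal. -/
def hdim {m : ℕ} (I : Ideal (MvPolynomial (Fin m) K)) (d : ℕ) : ℕ :=
  Module.finrank K (degPart I d)

/-- Hilbert function of `R/I` in degree `d`. -/
def HF {m : ℕ} (I : Ideal (MvPolynomial (Fin m) K)) (d : ℕ) : ℕ :=
  Module.finrank K (homogeneousSubmodule (Fin m) K d) - hdim I d

open Classical in
/-- `hyp Γ`: the maximum number of points of `Γ` contained in a hyperplane. -/
def hyp {m : ℕ} (Γ : Finset (Projectivization K (Fin m → K))) : ℕ :=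
  sSup {k | ∃ φ : Module.Dual K (Fin m → K), φ ≠ 0 ∧
    k = (Γ.filter fun P => φ P.rep = 0).card}

/-- the minimum distance `d(Γ) = |Γ| - hyp(Γ)`. -/
def minDist {m : ℕ} (Γ : Finset (Projectivization K (Fin m → K))) : ℕ :=
  Γ.card - hyp Γ

/-- `Γ` is non-degenerate: it is not contained in any hyperplane. -/
def Nondeg {m : ℕ} (Γ : Finset (Projectivization K (Fin m → K))) : Prop :=
  ∀ φ : Module.Dual K (Fin m → K), (∀ P ∈ Γ, φ P.rep = 0) → φ = 0

/-- The higher minimum distance `d(Γ)ₐ = |Γ| - max{|Γ'| : Γ' ⊆ Γ, dim I(Γ')ₐ > dim I(Γ)ₐ}`. -/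
def higherD {m : ℕ} (Γ : Finset (Projectivization K (Fin m → K))) (a : ℕ) : ℕ :=
  Γ.card - sSup {k | ∃ Γ' ⊆ Γ,
    hdim (vanishingIdeal (Γ' : Set (Projectivization K (Fin m → K)))) a >
      hdim (vanishingIdeal (Γ : Set (Projectivization K (Fin m → K)))) a ∧ k = Γ'.card}

open Classical in
/-- The degree `δ(P)` of a point `P` in `Γ`: the least degree in which the ideal
of `Γ \ {P}` is strictly bigger than the ideal of `Γ`. -/
def pointDegree {m : ℕ} (Γ : Finset (Projectivization K (Fin m → K)))
    (P : Projectivization K (Fin m → K)) : ℕ :=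
  sInf {d | hdim (vanishingIdeal ((Γ.erase P) : Set (Projectivization K (Fin m → K)))) d >
    hdim (vanishingIdeal (Γ : Set (Projectivization K (Fin m → K)))) d}

/-- A graded minimal free resolution
`0 → F_len → ⋯ → F_1 → R → R/I → 0` of `R/I`, `R = K[x_0,…,x_{N-1}]`.
`F_j = ⊕_{i : Fin (rk j)} R(-(twist j i))` for `1 ≤ j ≤ len`.
The differential `F_1 → R` is given by `gen` (so that its image is `I`) and the
differential `F_{j+2} → F_{j+1}` is given (in matrix form, rows indexed by the
target) by `mat j`.  All entries are homogeneous of the appropriate degrees, and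
minimality means all entries lie in the irrelevant maximal ideal
(zero constant coefficient). -/
structure MinFreeRes (N : ℕ) (K : Type) [Field K] (I : Ideal (MvPolynomial (Fin N) K)) where
  len : ℕ
  rk : ℕ → ℕ
  twist : (j : ℕ) → Fin (rk j) → ℕ
  gen : Fin (rk 1) → MvPolynomial (Fin N) K
  mat : (j : ℕ) → Matrix (Fin (rk (j + 1))) (Fin (rk (j + 2))) (MvPolynomial (Fin N) K)
  rk_len_pos : 0 < rk len
  rk_eq_zero : ∀ j, len < j → rk j = 0
  gen_hom : ∀ i, (gen i).IsHomogeneous (twist 1 i)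
  gen_min : ∀ i, constantCoeff (gen i) = 0
  gen_span : Ideal.span (Set.range gen) = I
  mat_hom : ∀ j i i', mat j i i' = 0 ∨
    ∃ d, (mat j i i').IsHomogeneous d ∧ d + twist (j + 1) i = twist (j + 2) i'
  mat_min : ∀ j i i', constantCoeff (mat j i i') = 0
  exact_one : ∀ v : Fin (rk 1) → MvPolynomial (Fin N) K,
    (∑ i, v i * gen i = 0) ↔ v ∈ LinearMap.range (mat 0).mulVecLin
  exact_rest : ∀ j, LinearMap.ker (mat j).mulVecLin = LinearMap.range (mat (j + 1)).mulVecLin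

/-- `a(Γ)`: the minimal twist `min_i {a_i}` occurring in the last module
`F_len = ⊕ R(-a_i)` of the minimal free resolution. -/
def MinFreeRes.aMin {N : ℕ} {K : Type} [Field K] {I : Ideal (MvPolynomial (Fin N) K)}
    (res : MinFreeRes N K I) : ℕ :=
  Finset.univ.inf'
    (Finset.univ_nonempty_iff.mpr (Fin.pos_iff_nonempty.mp res.rk_len_pos))
    (fun i => res.twist res.len i)

/-- The minimum socle degree `A_n = min_i {a_i - n}` (here `n = len`, the length of
the resolution). -/
def MinFreeRes.A {N : ℕ} {K : Type} [Field K] {I : Ideal (MvPolynomial (Fin N) K)}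
    (res : MinFreeRes N K I) : ℤ :=
  (res.aMin : ℤ) - res.len


/-- Embedding of points of `P^{m-1}` into the hyperplane `x_0 = 0` of `P^m`. -/
def embedPt {m : ℕ} (P : Projectivization K (Fin m → K)) :
    Projectivization K (Fin (m + 1) → K) :=
  Projectivization.mk K (Fin.cons 0 P.rep) (by
    intro h
    apply P.rep_nonzero
    funext i
    simpa using congrFun h i.succ)

/-- The point `[1, c, 1, …, 1]` of `P^n` (a point on a line avoiding `x_0 = 0`). -/
def linePt (n : ℕ) (c : K) : Projectivization K (Fin (n + 1) → K) :=
  Projectivization.mk K (fun j => if (j : ℕ) = 1 then c else 1) (by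
    intro h
    have h0 := congrFun h 0
    simp at h0)

open Classical in
/-- The set `Γ = Γ₁ ∪ Γ₂` of the Migliore construction: a set `Γ₀` of points of
`P^{n-1}` embedded into the hyperplane `x_0 = 0`, together with the points
`[1, u_i, 1, …, 1]` on a line. -/
def MigGamma {n : ℕ} (Γ₀ : Finset (Projectivization K (Fin n → K)))
    {β : ℕ} (u : Fin β → K) : Finset (Projectivization K (Fin (n + 1) → K)) :=
  Γ₀.image embedPt ∪ Finset.univ.image (fun i => linePt n (u i))

/-- The ideal `I₁ = ⟨x_0, J⟩ ⊆ R = K[x_0, …, x_n]`, where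
`J ⊆ S = K[x_1, …, x_n]` (vars of `S` indexed by `Fin n`, with `X i` of `S`
corresponding to `x_{i+1}` of `R`). -/
def I1 {n : ℕ} (J : Ideal (MvPolynomial (Fin n) K)) :
    Ideal (MvPolynomial (Fin (n + 1)) K) :=
  Ideal.span {X 0} ⊔ Ideal.map (rename (Fin.succ : Fin n → Fin (n + 1))) J

/-- The polynomial `∏_{i=1}^β (u_i x_0 - x_1)`. -/
def prodPoly (n β : ℕ) (u : Fin β → K) : MvPolynomial (Fin (n + 1)) K :=
  ∏ i : Fin β, (C (u i) * X 0 - X 1)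

/-- The ideal `I₂ = ⟨∏ (u_i x_0 - x_1), x_2 - x_0, …, x_n - x_0⟩` of the `β`
points `[1, u_i, 1, …, 1]` on a line. -/
def I2 (n β : ℕ) (u : Fin β → K) : Ideal (MvPolynomial (Fin (n + 1)) K) :=
  Ideal.span ({prodPoly n β u} ∪
    {f | ∃ j : Fin (n + 1), 2 ≤ (j : ℕ) ∧ f = X j - X 0})

/-- The sequence `x_0, x_1^t, x_2, …, x_n`. -/
def ciList (K : Type) [Field K] (n t : ℕ) : List (MvPolynomial (Fin (n + 1)) K) :=
  X 0 :: X 1 ^ t :: ((List.finRange (n + 1)).drop 2).map X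

/-- The complete intersection ideal `⟨x_0, x_1^t, x_2, …, x_n⟩`. -/
def CIdeal (K : Type) [Field K] (n t : ℕ) : Ideal (MvPolynomial (Fin (n + 1)) K) :=
  Ideal.span {f | f ∈ ciList K n t}

/-- The set `𝒜 = {x_0(x_2 - x_0), …, x_0(x_n - x_0), x_0·∏(u_i x_0 - x_1)}`. -/
def calA (n β : ℕ) (u : Fin β → K) : Set (MvPolynomial (Fin (n + 1)) K) :=
  {f | ∃ j : Fin (n + 1), 2 ≤ (j : ℕ) ∧ f = X 0 * (X j - X 0)} ∪
    {X 0 * prodPoly n β u}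



/-! ### Auxiliary lemmas -/

section Aux

lemma degree_eq_sum' {m : ℕ} (P : Fin m →₀ ℕ) : P.degree = P.sum fun _ => id := rfl

def degSubEquiv (m d : ℕ) : {P : Fin m →₀ ℕ // P.degree = d} ≃ Sym (Fin m) d :=
  (Equiv.subtypeEquivRight (fun P => by rw [degree_eq_sum'])).trans
    (Sym.equivNatSum (Fin m) d).symm

instance fintypeDeg (m d : ℕ) : Fintype {P : Fin m →₀ ℕ // P.degree = d} :=
  Fintype.ofEquiv _ (degSubEquiv m d).symm

lemma card_deg (m d : ℕ) :
    Fintype.card {P : Fin m →₀ ℕ // P.degree = d} = Nat.multichoose m d := by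
  rw [Fintype.card_congr (degSubEquiv m d), Sym.card_sym_eq_multichoose, Fintype.card_fin]

instance fintypeDeg' (m d : ℕ) : Fintype ↑{P : Fin m →₀ ℕ | P.degree = d} :=
  fintypeDeg m d

def homogEquiv (m d : ℕ) :
    (homogeneousSubmodule (Fin m) K d) ≃ₗ[K] ({P : Fin m →₀ ℕ | P.degree = d} →₀ K) :=
  (LinearEquiv.ofEq _ _ (homogeneousSubmodule_eq_finsupp_supported (Fin m) K d)).trans
    (AddMonoidAlgebra.supportedEquivFinsupp _)

set_option maxHeartbeats 4000000 in
instance homogFD (m d : ℕ) : FiniteDimensional K (homogeneousSubmodule (Fin m) K d) :=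
  Module.Finite.equiv (homogEquiv m d).symm

set_option maxHeartbeats 4000000 in
lemma finrank_homog (m d : ℕ) :
    Module.finrank K (homogeneousSubmodule (Fin m) K d) = Nat.multichoose m d := by
  rw [(homogEquiv (K := K) m d).finrank_eq, Module.finrank_finsupp_self]
  exact card_deg m d

lemma multichoose_eq_choose' {n d : ℕ} (hn : 1 ≤ n) :
    Nat.multichoose n d = (d + n - 1).choose (n - 1) := by
  rw [Nat.multichoose_eq]
  have h1 : n + d - 1 = d + n - 1 := by omega
  have h2 : (d + n - 1) - (n - 1) = d := by omega
  rw [h1, ← Nat.choose_symm (by omega : n - 1 ≤ d + n - 1), h2]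

lemma no_low_degree {n α s : ℕ} (hn : 2 ≤ n) {J : Ideal (MvPolynomial (Fin n) K)}
    (hgen : ∀ i, HF J i = min ((i + n - 1).choose (n - 1)) α)
    (hsmin : ∀ j, α < (j + n - 1).choose (n - 1) → s ≤ j)
    {d : ℕ} (hd : d < s) {p : MvPolynomial (Fin n) K}
    (hp : p.IsHomogeneous d) (hpJ : p ∈ J) : p = 0 := by
  by_contra hne
  have hC : (d + n - 1).choose (n - 1) ≤ α := by
    by_contra h
    exact absurd (hsmin d (lt_of_not_ge h)) (not_le.mpr hd)
  have hmem : p ∈ degPart J d := ⟨hpJ, hp⟩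
  have hfd : FiniteDimensional K (degPart J d) :=
    Submodule.finiteDimensional_of_le (inf_le_right)
  have hpos : 0 < hdim J d := by
    rw [hdim, Module.finrank_pos_iff]
    exact ⟨⟨⟨p, hmem⟩, 0, by simpa using hne⟩⟩
  have hle : hdim J d ≤ Module.finrank K (homogeneousSubmodule (Fin n) K d) :=
    Submodule.finrank_mono inf_le_right
  have hF : Module.finrank K (homogeneousSubmodule (Fin n) K d)
      = (d + n - 1).choose (n - 1) := by
    rw [finrank_homog, multichoose_eq_choose' (by omega)]
  have := hgen d
  rw [HF, min_eq_left hC, hF] at this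
  omega

/-- set `x₀ := 0` and shift variables down -/
def piDown (K : Type) [Field K] (n : ℕ) :
    MvPolynomial (Fin (n+1)) K →ₐ[K] MvPolynomial (Fin n) K :=
  aeval (Fin.cases 0 X)

lemma piDown_X_zero {n : ℕ} : piDown K n (X 0) = 0 := by
  simp [piDown]

lemma piDown_rename {n : ℕ} (p : MvPolynomial (Fin n) K) :
    piDown K n (rename Fin.succ p) = p := by
  rw [piDown, aeval_rename]
  have : (Fin.cases 0 X ∘ Fin.succ : Fin n → MvPolynomial (Fin n) K) = X := by
    funext i; simp
  rw [this]
  exact aeval_X_left_apply p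

lemma piDown_isHomogeneous {n d : ℕ} {f : MvPolynomial (Fin (n+1)) K}
    (hf : f.IsHomogeneous d) : (piDown K n f).IsHomogeneous d := by
  have := hf.aeval (Fin.cases 0 X : Fin (n+1) → MvPolynomial (Fin n) K) (n := 1) ?_
  · simpa [piDown] using this
  · intro i
    induction i using Fin.cases with
    | zero => simpa using isHomogeneous_zero (Fin n) K 1
    | succ j => simpa using isHomogeneous_X K j

lemma sub_mem_span_X0 {n : ℕ} (f : MvPolynomial (Fin (n+1)) K) :
    f - rename Fin.succ (piDown K n f) ∈ Ideal.span {(X 0 : MvPolynomial (Fin (n+1)) K)} := by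
  induction f using MvPolynomial.induction_on with
  | C a => simp [piDown]
  | add f g hf hg =>
    have : f + g - rename Fin.succ (piDown K n (f + g)) =
        (f - rename Fin.succ (piDown K n f)) + (g - rename Fin.succ (piDown K n g)) := by
      simp only [map_add]; ring
    rw [this]; exact Ideal.add_mem _ hf hg
  | mul_X p j hp =>
    induction j using Fin.cases with
    | zero =>
      have : p * X 0 - rename Fin.succ (piDown K n (p * X 0)) = p * X 0 := by
        simp [piDown_X_zero]
      rw [this]
      exact Ideal.mul_mem_left _ _ (Ideal.subset_span rfl)
    | succ i =>
      have : p * X i.succ - rename Fin.succ (piDown K n (p * X i.succ)) =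
          (p - rename Fin.succ (piDown K n p)) * X i.succ := by
        simp only [map_mul, piDown, aeval_X, Fin.cases_succ, rename_X]
        ring
      rw [this]
      exact Ideal.mul_mem_right _ _ hp

lemma mem_span_X0_of_piDown_eq_zero {n : ℕ} {f : MvPolynomial (Fin (n+1)) K}
    (h : piDown K n f = 0) : f ∈ Ideal.span {(X 0 : MvPolynomial (Fin (n+1)) K)} := by
  have := sub_mem_span_X0 (K := K) f
  rwa [h, map_zero, sub_zero] at this

lemma piDown_mem_I1 {n : ℕ} {J : Ideal (MvPolynomial (Fin n) K)}
    {f : MvPolynomial (Fin (n+1)) K} (hf : f ∈ I1 J) : piDown K n f ∈ J := by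
  rw [I1] at hf
  obtain ⟨a, ha, b, hb, rfl⟩ := Submodule.mem_sup.mp hf
  rw [map_add]
  refine J.add_mem ?_ ?_
  · obtain ⟨c, rfl⟩ := Ideal.mem_span_singleton.mp ha
    rw [map_mul, piDown_X_zero, zero_mul]
    exact J.zero_mem
  · have hle : Ideal.map (rename (Fin.succ : Fin n → Fin (n+1))) J
        ≤ Ideal.comap (piDown K n) J := by
      rw [Ideal.map_le_iff_le_comap]
      intro p hp
      rw [Ideal.mem_comap, Ideal.mem_comap, piDown_rename]
      exact hp
    exact Ideal.mem_comap.mp (hle hb)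

/-- substitute `xⱼ := x₀` for `j ≥ 2` -/
def tau (K : Type) [Field K] (n : ℕ) :
    MvPolynomial (Fin (n+1)) K →ₐ[K] MvPolynomial (Fin (n+1)) K :=
  aeval (fun j => if 2 ≤ (j : ℕ) then X 0 else X j)

lemma tau_X_le {n : ℕ} {j : Fin (n+1)} (h : ¬ 2 ≤ (j : ℕ)) : tau K n (X j) = X j := by
  simp [tau, h]

lemma tau_X_ge {n : ℕ} {j : Fin (n+1)} (h : 2 ≤ (j : ℕ)) : tau K n (X j) = X 0 := by
  simp [tau, h]

lemma tau_prodPoly {n β : ℕ} (hn : 2 ≤ n) (u : Fin β → K) :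
    tau K n (prodPoly n β u) = prodPoly n β u := by
  have h0 : ¬ 2 ≤ ((0 : Fin (n+1)) : ℕ) := by simp
  have h1 : ((1 : Fin (n+1)) : ℕ) = 1 := by
    rw [Fin.val_one', Nat.mod_eq_of_lt (by omega)]
  rw [prodPoly, map_prod]
  refine Finset.prod_congr rfl fun i _ => ?_
  rw [map_sub, map_mul, tau_X_le h0, tau_X_le (by rw [h1]; omega)]
  simp [tau]

lemma sub_tau_mem {n : ℕ} (f : MvPolynomial (Fin (n+1)) K) :
    f - tau K n f ∈ Ideal.span {f : MvPolynomial (Fin (n+1)) K |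
      ∃ j : Fin (n + 1), 2 ≤ (j : ℕ) ∧ f = X j - X 0} := by
  induction f using MvPolynomial.induction_on with
  | C a => simp [tau]
  | add f g hf hg =>
    have : f + g - tau K n (f + g) = (f - tau K n f) + (g - tau K n g) := by
      simp only [map_add]; ring
    rw [this]; exact Ideal.add_mem _ hf hg
  | mul_X p j hp =>
    by_cases h : 2 ≤ (j : ℕ)
    · have : p * X j - tau K n (p * X j) =
          (p - tau K n p) * X j + tau K n p * (X j - X 0) := by
        rw [map_mul, tau_X_ge h]; ring
      rw [this]
      exact Ideal.add_mem _ (Ideal.mul_mem_right _ _ hp)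
        (Ideal.mul_mem_left _ _ (Ideal.subset_span ⟨j, h, rfl⟩))
    · have : p * X j - tau K n (p * X j) = (p - tau K n p) * X j := by
        rw [map_mul, tau_X_le h]; ring
      rw [this]
      exact Ideal.mul_mem_right _ _ hp

lemma tau_mem_of_mem_I2 {n β : ℕ} (hn : 2 ≤ n) (u : Fin β → K)
    {f : MvPolynomial (Fin (n+1)) K} (hf : f ∈ I2 n β u) :
    tau K n f ∈ Ideal.span {prodPoly n β u} := by
  have hmap : Ideal.map (tau K n) (I2 n β u) ≤ Ideal.span {prodPoly n β u} := by
    rw [I2, Ideal.map_span, Ideal.span_le]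
    rintro _ ⟨g, hg, rfl⟩
    rcases hg with rfl | ⟨j, hj, rfl⟩
    · rw [tau_prodPoly hn u]
      exact Ideal.subset_span rfl
    · rw [map_sub, tau_X_ge hj, tau_X_le (by simp)]
      simp
  exact hmap (Ideal.mem_map_of_mem _ hf)

lemma mem_I2_of_tau_mem {n β : ℕ} (u : Fin β → K)
    {f : MvPolynomial (Fin (n+1)) K} (hf : tau K n f ∈ Ideal.span {prodPoly n β u}) :
    f ∈ I2 n β u := by
  have h1 : f - tau K n f ∈ I2 n β u :=
    Ideal.span_mono Set.subset_union_right (sub_tau_mem f)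
  have h2 : tau K n f ∈ I2 n β u := Ideal.span_mono Set.subset_union_left hf
  simpa using Ideal.add_mem _ h1 h2

lemma prime_X_zero {m : ℕ} : Prime (X 0 : MvPolynomial (Fin (m+1)) K) := by
  rw [← MulEquiv.prime_iff (MvPolynomial.finSuccEquiv K m).toRingEquiv.toMulEquiv]
  have : (MvPolynomial.finSuccEquiv K m).toRingEquiv.toMulEquiv (X 0)
      = Polynomial.X := finSuccEquiv_X_zero
  rw [this]
  exact Polynomial.prime_X

lemma prime_X_one {n : ℕ} : Prime (X 1 : MvPolynomial (Fin (n+1)) K) := by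
  have h := MulEquiv.prime_iff (renameEquiv K (Equiv.swap (0 : Fin (n+1)) 1)).toRingEquiv.toMulEquiv
    (p := (X 0 : MvPolynomial (Fin (n+1)) K))
  have hx : (renameEquiv K (Equiv.swap (0 : Fin (n+1)) 1)).toRingEquiv.toMulEquiv
      (X 0 : MvPolynomial (Fin (n+1)) K) = X 1 := by
    show (renameEquiv K (Equiv.swap (0 : Fin (n+1)) 1)) (X 0) = X 1
    rw [renameEquiv_apply, rename_X, Equiv.swap_apply_left]
  rw [hx] at h
  exact h.mpr prime_X_zero

lemma zero_ne_one_fin {n : ℕ} (hn : 2 ≤ n) : (0 : Fin (n+1)) ≠ 1 := by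
  intro h
  have := congrArg Fin.val h
  rw [Fin.val_zero, Fin.val_one', Nat.mod_eq_of_lt (by omega)] at this
  omega

/-- the substitution `x₁ ↦ c x₀ - x₁`, an involutive automorphism -/
def psiHom (K : Type) [Field K] (n : ℕ) (c : K) :
    MvPolynomial (Fin (n+1)) K →ₐ[K] MvPolynomial (Fin (n+1)) K :=
  aeval (fun j => if j = 1 then C c * X 0 - X 1 else X j)

lemma psiHom_invol {n : ℕ} (hn : 2 ≤ n) (c : K) :
    (psiHom K n c).comp (psiHom K n c) = AlgHom.id K _ := by
  apply MvPolynomial.algHom_ext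
  intro i
  simp only [AlgHom.comp_apply, AlgHom.id_apply, psiHom, aeval_X]
  by_cases h : i = 1
  · subst h
    rw [if_pos rfl]
    simp only [map_sub, map_mul, aeval_C, aeval_X]
    rw [if_neg (zero_ne_one_fin hn)]
    simp only [if_true, algebraMap_eq, sub_sub_cancel]
  · rw [if_neg h, aeval_X, if_neg h]

def psiEquiv (n : ℕ) (hn : 2 ≤ n) (c : K) :
    MvPolynomial (Fin (n+1)) K ≃ₐ[K] MvPolynomial (Fin (n+1)) K :=
  AlgEquiv.ofAlgHom (psiHom K n c) (psiHom K n c) (psiHom_invol hn c) (psiHom_invol hn c)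

lemma prime_lin {n : ℕ} (hn : 2 ≤ n) (c : K) :
    Prime (C c * X 0 - X 1 : MvPolynomial (Fin (n+1)) K) := by
  have h := MulEquiv.prime_iff (psiEquiv n hn c).toRingEquiv.toMulEquiv
    (p := (X 1 : MvPolynomial (Fin (n+1)) K))
  have hx : (psiEquiv n hn c).toRingEquiv.toMulEquiv (X 1 : MvPolynomial (Fin (n+1)) K)
      = C c * X 0 - X 1 := by
    show psiHom K n c (X 1) = _
    rw [psiHom, aeval_X, if_pos rfl]
  rw [hx] at h
  exact h.mpr prime_X_one

lemma lin_not_dvd_X0 {n : ℕ} (hn : 2 ≤ n) (c : K) :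
    ¬ (C c * X 0 - X 1 : MvPolynomial (Fin (n+1)) K) ∣ X 0 := by
  intro h
  have := (eval (fun j : Fin (n+1) => if j = 1 then c else 1)).map_dvd h
  simp [zero_ne_one_fin hn] at this

lemma prod_primes_dvd_of_dvd_mul {R ι : Type*} [CommRing R] [IsDomain R]
    {x : R} (s : Finset ι) {p : ι → R}
    (hp : ∀ i ∈ s, Prime (p i)) (hx : ∀ i ∈ s, ¬ p i ∣ x)
    {h : R} (hd : (∏ i ∈ s, p i) ∣ x * h) : (∏ i ∈ s, p i) ∣ h := by
  classical
  induction s using Finset.induction generalizing h with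
  | empty => exact one_dvd _
  | @insert a s hnotmem ih =>
    rw [Finset.prod_insert hnotmem] at hd ⊢
    have hpa := hp a (Finset.mem_insert_self a s)
    have hd' : p a ∣ x * h := (Dvd.intro _ rfl).trans hd
    rcases hpa.2.2 _ _ hd' with h1 | h2
    · exact absurd h1 (hx a (Finset.mem_insert_self a s))
    obtain ⟨h', rfl⟩ := h2
    have hre : x * (p a * h') = p a * (x * h') := by ring
    rw [hre] at hd
    have hQ := (mul_dvd_mul_iff_left hpa.ne_zero).mp hd
    exact mul_dvd_mul_left _ (ih (fun i hi => hp i (Finset.mem_insert_of_mem hi))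
      (fun i hi => hx i (Finset.mem_insert_of_mem hi)) hQ)

lemma prodPoly_dvd_of_dvd_mul {n β : ℕ} (hn : 2 ≤ n) (u : Fin β → K)
    {h : MvPolynomial (Fin (n+1)) K} (hd : prodPoly n β u ∣ X 0 * h) :
    prodPoly n β u ∣ h := by
  refine prod_primes_dvd_of_dvd_mul Finset.univ
    (fun i _ => prime_lin hn (u i)) (fun i _ => lin_not_dvd_X0 hn (u i)) hd

lemma X0_mul_mem_spanA {n β : ℕ} (u : Fin β → K) {g : MvPolynomial (Fin (n+1)) K}
    (hg : g ∈ I2 n β u) : X 0 * g ∈ Ideal.span (calA n β u) := by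
  refine Submodule.span_induction ?_ ?_ ?_ ?_ hg
  · rintro x (rfl | ⟨j, hj, rfl⟩)
    · exact Ideal.subset_span (Or.inr rfl)
    · exact Ideal.subset_span (Or.inl ⟨j, hj, rfl⟩)
  · simp
  · intro x y _ _ hx hy
    rw [mul_add]
    exact Ideal.add_mem _ hx hy
  · intro a x _ hx
    rw [smul_eq_mul, show X 0 * (a * x) = a * (X 0 * x) by ring]
    exact Ideal.mul_mem_left _ _ hx

end Aux

/-- (The Claim.) In the Migliore construction, every
homogeneous `f ∈ I = I₁ ∩ I₂` of degree `< s` lies in the ideal generated by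
`𝒜 = {x_0(x_2-x_0), …, x_0(x_n-x_0), x_0·∏(u_i x_0 - x_1)}`; consequently
every homogeneous element of `I` not in `⟨𝒜⟩` (in particular every minimal
generator of `I` other than those in `𝒜`) has degree at least `s`. -/
theorem migliore_low_degree_elements
    {K : Type} [Field K] [CharZero K] {n α β : ℕ} (hn : 2 ≤ n)
    (hα : 0 < α) (hβ : 0 < β)
    (Γ₀ : Finset (Projectivization K (Fin n → K)))
    (hcard : Γ₀.card = α)
    (hgen : ∀ i, HF (vanishingIdeal (Γ₀ : Set (Projectivization K (Fin n → K)))) i =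
      min ((i + n - 1).choose (n - 1)) α)
    (u : Fin β → K) (hu : Function.Injective u)
    (s : ℕ) (hs : α < (s + n - 1).choose (n - 1))
    (hsmin : ∀ j, α < (j + n - 1).choose (n - 1) → s ≤ j) :
    (∀ f ∈ I1 (vanishingIdeal (Γ₀ : Set (Projectivization K (Fin n → K)))) ⊓ I2 n β u,
      ∀ d, d < s → f.IsHomogeneous d → f ∈ Ideal.span (calA n β u)) ∧
    (∀ f ∈ I1 (vanishingIdeal (Γ₀ : Set (Projectivization K (Fin n → K)))) ⊓ I2 n β u,
      ∀ d, f.IsHomogeneous d → f ∉ Ideal.span (calA n β u) → s ≤ d) := by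
  have main : ∀ f ∈ I1 (vanishingIdeal (Γ₀ : Set (Projectivization K (Fin n → K)))) ⊓ I2 n β u,
        ∀ d, d < s → f.IsHomogeneous d → f ∈ Ideal.span (calA n β u) := by
      intro f hf d hd hfd
      obtain ⟨hf1, hf2⟩ := hf
      have hpi0 : piDown K n f = 0 :=
        no_low_degree hn hgen hsmin hd (piDown_isHomogeneous hfd) (piDown_mem_I1 hf1)
      obtain ⟨g, rfl⟩ := Ideal.mem_span_singleton.mp (mem_span_X0_of_piDown_eq_zero hpi0)
      have htau : tau K n (X 0 * g) ∈ Ideal.span {prodPoly n β u} :=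
        tau_mem_of_mem_I2 hn u hf2
      rw [map_mul, tau_X_le (by simp)] at htau
      have hdvd : prodPoly n β u ∣ X 0 * tau K n g := Ideal.mem_span_singleton.mp htau
      have hg : g ∈ I2 n β u :=
        mem_I2_of_tau_mem u (Ideal.mem_span_singleton.mpr (prodPoly_dvd_of_dvd_mul hn u hdvd))
      exact X0_mul_mem_spanA u hg
  refine ⟨main, ?_⟩
  intro f hf d hfd hnot
  by_contra hlt
  exact hnot (main f hf d (by omega) hfd)

end PointsMinDist
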